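/- Let V be a variety and F, G monotone global operators on V for reflexive admissible relations satisfying the homomorphism property. Then the following are equivalent: (1) V has a single ternary term Mal'cev modulo F_A and G_A for every A ∈ V; (2) every A ∈ V has a (possibly different) term Mal'cev modulo F_A and G_A; (3) for every A ∈ V and every reflexive admissible R on A, R ∘ R ⊆ F_A(R) ∘ R ∘ G_A(R); (4) for every A ∈ V and every reflexive admissible R on A, R ⊆ F_A(R) ∘ R⁻ ∘ G_A(R). -/

import Mathlib

structure Signature where
  symbols : Type
  arity : symbols → ℕ

structure UAAlgebra (σ : Signature) where
  carrier : Type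
  ops : ∀ s, (Fin (σ.arity s) → carrier) → carrier

namespace Paper

variable {σ : Signature}

/-- Binary relations on the carrier of an algebra. -/
abbrev Rel (A : UAAlgebra σ) := A.carrier → A.carrier → Prop

/-- A relation is admissible (compatible) if it is preserved by all operations,
i.e. it is a subalgebra of `A × A`. -/
def Compatible (A : UAAlgebra σ) (R : Rel A) : Prop :=
  ∀ s (f g : Fin (σ.arity s) → A.carrier),
    (∀ j, R (f j) (g j)) → R (A.ops s f) (A.ops s g)

/-- Reflexive and admissible. -/
def RAdm (A : UAAlgebra σ) (R : Rel A) : Prop :=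
  Reflexive R ∧ Compatible A R

/-- Relational composition. -/
def comp {A : UAAlgebra σ} (R S : Rel A) : Rel A :=
  fun a c => ∃ b, R a b ∧ S b c

/-- `cl A X` : the least compatible relation containing `X`. -/
def cl (A : UAAlgebra σ) (X : Rel A) : Rel A :=
  fun a b => ∀ S : Rel A, Compatible A S → (∀ x y, X x y → S x y) → S a b

/-- The least reflexive compatible relation containing `X`. -/
def clRefl (A : UAAlgebra σ) (X : Rel A) : Rel A :=
  fun a b => ∀ S : Rel A, Reflexive S → Compatible A S → (∀ x y, X x y → S x y) → S a b

/-- `altComp R S n` is `R ∘ₙ S`, the alternating composition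
`R ∘ S ∘ R ∘ ⋯` with `n` factors (`n - 1` occurrences of `∘`);
by convention `R ∘₀ S` is the identity relation. -/
def altComp {A : UAAlgebra σ} (R S : Rel A) : ℕ → Rel A
  | 0 => Eq
  | n + 1 => comp R (altComp S R n)

/-- `relPow R n = Rⁿ`, with `R⁰` the identity relation. -/
def relPow {A : UAAlgebra σ} (R : Rel A) : ℕ → Rel A
  | 0 => Eq
  | n + 1 => comp R (relPow R n)

/-- The join `R + S = ⋃ₙ R ∘ₙ S`. -/
def join {A : UAAlgebra σ} (R S : Rel A) : Rel A :=
  fun a b => ∃ n, altComp R S n a b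

/-- Converse relation `R⁻`. -/
def conv {A : UAAlgebra σ} (R : Rel A) : Rel A :=
  fun a b => R b a

/-- Composition of a finite list of relations (empty list gives the identity). -/
def compList {A : UAAlgebra σ} : List (Rel A) → Rel A
  | [] => Eq
  | r :: l => comp r (compList l)

/-- Join of a family of relations: the union of all finite compositions of members. -/
def joinFam {A : UAAlgebra σ} {ι : Type} (R : ι → Rel A) : Rel A :=
  fun a b => ∃ l : List ι, compList (l.map R) a b

/-- The smallest congruence containing `X`. -/
def cg (A : UAAlgebra σ) (X : Rel A) : Rel A :=
  fun a b => ∀ S : Rel A, Equivalence S → Compatible A S →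
    (∀ x y, X x y → S x y) → S a b

/-- Terms of the signature `σ` in `n` variables. -/
inductive Term (σ : Signature) (n : ℕ) : Type
  | var : Fin n → Term σ n
  | op : ∀ s, (Fin (σ.arity s) → Term σ n) → Term σ n

/-- Evaluation of a term in an algebra under an environment. -/
def Term.eval {n : ℕ} (A : UAAlgebra σ) (env : Fin n → A.carrier) : Term σ n → A.carrier
  | .var k => env k
  | .op s args => A.ops s fun j => (args j).eval A env

/-- The ternary term operation induced by a ternary term. -/
def tApp (A : UAAlgebra σ) (t : Term σ 3) (a b c : A.carrier) : A.carrier :=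
  t.eval A ![a, b, c]

/-- `t` is Mal'cev modulo `F` and `G`: whenever `a R b` with `R` reflexive admissible,
`a F(R) t(a,b,b)` and `t(a,a,b) G(R) b`. -/
def MalcevMod (A : UAAlgebra σ) (F G : Rel A → Rel A) (t : Term σ 3) : Prop :=
  ∀ R : Rel A, RAdm A R → ∀ a b : A.carrier, R a b →
    F R a (tApp A t a b b) ∧ G R (tApp A t a a b) b

end Paper

open Paper

namespace Paper

variable {σ : Signature}

/-- A set of equations (each in some number of variables). -/
abbrev EqTheory (σ : Signature) := Set (Σ n : ℕ, Term σ n × Term σ n)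

/-- `A` belongs to the variety axiomatized by `E`. -/
def Satisfies (A : UAAlgebra σ) (E : EqTheory σ) : Prop :=
  ∀ e ∈ E, ∀ env : Fin e.1 → A.carrier, e.2.1.eval A env = e.2.2.eval A env

/-- Homomorphisms of algebras. -/
structure Hom (A B : UAAlgebra σ) where
  toFun : A.carrier → B.carrier
  map_ops : ∀ s f, toFun (A.ops s f) = B.ops s (toFun ∘ f)

/-- `φ(R)`: the smallest reflexive compatible relation on the codomain containing
`{(φ b, φ c) : b R c}`. -/
def mapRel {A B : UAAlgebra σ} (φ : Hom A B) (R : Rel A) : Rel B :=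
  clRefl B (fun x y => ∃ a b, R a b ∧ φ.toFun a = x ∧ φ.toFun b = y)

/-- `X` with distinguished elements `x, y` is the free algebra on two generators in
the variety of `E`. -/
def IsFree2 (E : EqTheory σ) (X : UAAlgebra σ) (x y : X.carrier) : Prop :=
  Satisfies X E ∧ ∀ A : UAAlgebra σ, Satisfies A E → ∀ a b : A.carrier,
    ∃! φ : Hom X A, φ.toFun x = a ∧ φ.toFun y = b

/-- `X` with `x, y, z` is the free algebra on three generators in the variety of `E`. -/
def IsFree3 (E : EqTheory σ) (X : UAAlgebra σ) (x y z : X.carrier) : Prop :=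
  Satisfies X E ∧ ∀ A : UAAlgebra σ, Satisfies A E → ∀ a b c : A.carrier,
    ∃! φ : Hom X A, φ.toFun x = a ∧ φ.toFun y = b ∧ φ.toFun z = c

/-- A global operator for reflexive admissible relations on the variety of `E`,
mapping reflexive admissible relations to reflexive admissible relations. -/
def GlobalOp (E : EqTheory σ)
    (F : ∀ A : UAAlgebra σ, Satisfies A E → Rel A → Rel A) : Prop :=
  ∀ (A : UAAlgebra σ) (hA : Satisfies A E) (R : Rel A), RAdm A R → RAdm A (F A hA R)

/-- Monotonicity of a global operator. -/
def MonotoneOp (E : EqTheory σ)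
    (F : ∀ A : UAAlgebra σ, Satisfies A E → Rel A → Rel A) : Prop :=
  ∀ (A : UAAlgebra σ) (hA : Satisfies A E) (R S : Rel A), RAdm A R → RAdm A S →
    (∀ a b, R a b → S a b) → ∀ a b, F A hA R a b → F A hA S a b

/-- The homomorphism property: `φ(F_B(R)) ⊆ F_A(φ(R))`. -/
def HomProp (E : EqTheory σ)
    (F : ∀ A : UAAlgebra σ, Satisfies A E → Rel A → Rel A) : Prop :=
  ∀ (B A : UAAlgebra σ) (hB : Satisfies B E) (hA : Satisfies A E) (φ : Hom B A)
    (R : Rel B), RAdm B R →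
    ∀ b c, F B hB R b c → F A hA (mapRel φ R) (φ.toFun b) (φ.toFun c)

end Paper
namespace MyAux
open Paper
variable {σ : Signature}

def rename {m k : ℕ} (f : Fin m → Fin k) : Term σ m → Term σ k
  | .var i => .var (f i)
  | .op s args => .op s fun j => rename f (args j)

theorem eval_rename {m k : ℕ} (f : Fin m → Fin k) (t : Term σ m)
    (A : UAAlgebra σ) (env : Fin k → A.carrier) :
    (rename f t).eval A env = t.eval A (fun i => env (f i)) := by
  induction t with
  | var i => rfl
  | op s args ih =>
      simp only [rename, Term.eval]
      exact congrArg _ (funext fun j => ih j)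

theorem hom_eval {A B : UAAlgebra σ} (φ : Hom A B) {m : ℕ} (t : Term σ m)
    (env : Fin m → A.carrier) :
    φ.toFun (t.eval A env) = t.eval B (fun i => φ.toFun (env i)) := by
  induction t with
  | var i => rfl
  | op s args ih =>
      simp only [Term.eval, φ.map_ops]
      exact congrArg _ (funext fun j => ih j)

theorem compat_eval {A : UAAlgebra σ} {R : Rel A} (hR : Compatible A R)
    {m : ℕ} (t : Term σ m) (e1 e2 : Fin m → A.carrier) (h : ∀ j, R (e1 j) (e2 j)) :
    R (t.eval A e1) (t.eval A e2) := by
  induction t with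
  | var i => exact h i
  | op s args ih => exact hR s _ _ fun j => ih j

theorem clRefl_radm (A : UAAlgebra σ) (X : Rel A) : RAdm A (clRefl A X) :=
  ⟨fun a S hS _ _ => hS a,
   fun s f g h S hrS hcS hXS => hcS s f g fun j => h j S hrS hcS hXS⟩

theorem clRefl_le {A : UAAlgebra σ} {X S : Rel A} (hr : Reflexive S)
    (hc : Compatible A S) (hXS : ∀ a b, X a b → S a b) :
    ∀ a b, clRefl A X a b → S a b :=
  fun _ _ h => h S hr hc hXS

theorem le_clRefl {A : UAAlgebra σ} (X : Rel A) (a b : A.carrier) (h : X a b) :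
    clRefl A X a b :=
  fun _ _ _ hXS => hXS a b h

def eqvSetoid (n : ℕ) (E : EqTheory σ) : Setoid (Term σ n) where
  r s t := ∀ (A : UAAlgebra σ), Satisfies A E → ∀ env : Fin n → A.carrier,
    s.eval A env = t.eval A env
  iseqv := ⟨fun _ _ _ _ => rfl, fun h A hA env => (h A hA env).symm,
            fun h1 h2 A hA env => (h1 A hA env).trans (h2 A hA env)⟩

def FQ (n : ℕ) (E : EqTheory σ) : Type := Quotient (eqvSetoid n E)

def FQ.mk {n : ℕ} {E : EqTheory σ} (t : Term σ n) : FQ n E :=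
  Quotient.mk (eqvSetoid n E) t

noncomputable def FreeAlg (n : ℕ) (E : EqTheory σ) : UAAlgebra σ where
  carrier := FQ n E
  ops s f := FQ.mk (Term.op s fun j => (f j).out)

def gen (n : ℕ) (E : EqTheory σ) : Fin n → FQ n E := fun k => FQ.mk (Term.var k)

def ev {n : ℕ} {E : EqTheory σ} (A : UAAlgebra σ) (hA : Satisfies A E)
    (env : Fin n → A.carrier) : FQ n E → A.carrier :=
  Quotient.lift (fun t => t.eval A env) (fun _ _ h => h A hA env)

theorem ev_mk {n : ℕ} {E : EqTheory σ} (A : UAAlgebra σ) (hA : Satisfies A E)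
    (env : Fin n → A.carrier) (t : Term σ n) :
    ev A hA env (FQ.mk t) = t.eval A env := rfl

theorem ev_out {n : ℕ} {E : EqTheory σ} (A : UAAlgebra σ) (hA : Satisfies A E)
    (env : Fin n → A.carrier) (q : FQ n E) :
    ev A hA env q = q.out.eval A env := by
  conv_lhs => rw [← q.out_eq]
  rfl

def evHom {n : ℕ} {E : EqTheory σ} (A : UAAlgebra σ) (hA : Satisfies A E)
    (env : Fin n → A.carrier) : Hom (FreeAlg n E) A where
  toFun := ev A hA env
  map_ops := by
    intro s f
    show (Term.op s fun j => (f j).out).eval A env = _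
    show A.ops s (fun j => (f j).out.eval A env) = _
    exact congrArg _ (funext fun j => (ev_out A hA env (f j)).symm)

theorem fq_ext {n : ℕ} {E : EqTheory σ} {q1 q2 : FQ n E}
    (h : ∀ (A : UAAlgebra σ) (hA : Satisfies A E) (env : Fin n → A.carrier),
      ev A hA env q1 = ev A hA env q2) : q1 = q2 := by
  rw [← q1.out_eq, ← q2.out_eq]
  refine Quotient.sound (fun A hA env => ?_)
  have := h A hA env
  rwa [ev_out, ev_out] at this

theorem eval_gen {n : ℕ} {E : EqTheory σ} (t : Term σ n) :
    t.eval (FreeAlg n E) (gen n E) = FQ.mk t := by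
  refine fq_ext (fun A hA env => ?_)
  have h1 : ev A hA env (t.eval (FreeAlg n E) (gen n E))
      = t.eval A (fun i => ev A hA env (gen n E i)) :=
    hom_eval (evHom A hA env) t (gen n E)
  rw [h1, ev_mk]
  rfl

theorem freeAlg_satisfies (n : ℕ) (E : EqTheory σ) : Satisfies (FreeAlg n E) E := by
  intro e he env
  refine fq_ext (fun A hA env' => ?_)
  have h1 : ev A hA env' (e.2.1.eval (FreeAlg n E) env)
      = e.2.1.eval A (fun i => ev A hA env' (env i)) :=
    hom_eval (evHom A hA env') e.2.1 env
  have h2 : ev A hA env' (e.2.2.eval (FreeAlg n E) env)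
      = e.2.2.eval A (fun i => ev A hA env' (env i)) :=
    hom_eval (evHom A hA env') e.2.2 env
  exact h1.trans ((hA e he _).trans h2.symm)

def termRel (B : UAAlgebra σ) {m : ℕ} (p q : Fin m → B.carrier) : Rel B :=
  fun a b => ∃ w : Term σ m, a = w.eval B p ∧ b = w.eval B q

theorem termRel_compat (B : UAAlgebra σ) {m : ℕ} (p q : Fin m → B.carrier) :
    Compatible B (termRel B p q) := by
  intro s f g h
  choose w hw1 hw2 using h
  exact ⟨.op s w, congrArg _ (funext hw1), congrArg _ (funext hw2)⟩

theorem termRel_refl {n m : ℕ} {E : EqTheory σ} (p q : Fin m → FQ n E)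
    (ι : Fin n → Fin m) (hp : ∀ k, p (ι k) = gen n E k)
    (hq : ∀ k, q (ι k) = gen n E k) :
    Reflexive (termRel (FreeAlg n E) p q) := by
  intro a
  refine ⟨rename ι a.out, ?_, ?_⟩
  · rw [eval_rename ι a.out (FreeAlg n E) p]
    have : (fun i => p (ι i)) = gen n E := funext hp
    rw [this, eval_gen]
    exact a.out_eq.symm
  · rw [eval_rename ι a.out (FreeAlg n E) q]
    have : (fun i => q (ι i)) = gen n E := funext hq
    rw [this, eval_gen]
    exact a.out_eq.symm

end MyAux
namespace MyAux
open Paper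
variable {σ : Signature}

theorem transferF {n : ℕ} {E : EqTheory σ}
    {F : ∀ A : UAAlgebra σ, Satisfies A E → Rel A → Rel A}
    (hFmono : MonotoneOp E F) (hFhom : HomProp E F)
    (X : Rel (FreeAlg n E)) {u v : FQ n E}
    (hFu : F (FreeAlg n E) (freeAlg_satisfies n E) (clRefl (FreeAlg n E) X) u v)
    (A : UAAlgebra σ) (hA : Satisfies A E) (R' : Rel A) (hR' : RAdm A R')
    (env : Fin n → A.carrier)
    (hX : ∀ p q, X p q → R' (ev A hA env p) (ev A hA env q)) :
    F A hA R' (ev A hA env u) (ev A hA env v) := by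
  have key : ∀ p q, clRefl (FreeAlg n E) X p q →
      R' ((evHom A hA env).toFun p) ((evHom A hA env).toFun q) := by
    intro p q h
    refine h _ (fun p => hR'.1 _) ?_ hX
    intro s f g hfg
    rw [show ev A hA env ((FreeAlg n E).ops s f)
          = A.ops s (fun j => ev A hA env (f j)) from (evHom A hA env).map_ops s f,
        show ev A hA env ((FreeAlg n E).ops s g)
          = A.ops s (fun j => ev A hA env (g j)) from (evHom A hA env).map_ops s g]
    exact hR'.2 s _ _ hfg
  have hmr : ∀ p q, mapRel (evHom A hA env) (clRefl (FreeAlg n E) X) p q → R' p q :=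
    clRefl_le hR'.1 hR'.2 (by rintro p q ⟨p', q', hpq, rfl, rfl⟩; exact key _ _ hpq)
  have h1 := hFhom (FreeAlg n E) A (freeAlg_satisfies n E) hA (evHom A hA env)
    (clRefl (FreeAlg n E) X) (clRefl_radm _ X) u v hFu
  exact hFmono A hA (mapRel (evHom A hA env) (clRefl (FreeAlg n E) X)) R'
    (clRefl_radm A _) hR' hmr _ _ h1

end MyAux

open MyAux

/-- Theorem 3: for monotone global operators `F`, `G` with the homomorphism
property on a variety `V`, the following are equivalent:
(1) `V` has a single ternary term Mal'cev modulo `F_A` and `G_A` for every `A ∈ V`;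
(2) every `A ∈ V` has a term Mal'cev modulo `F_A` and `G_A`;
(3) `R ∘ R ⊆ F_A(R) ∘ R ∘ G_A(R)` for every `A ∈ V` and reflexive admissible `R`;
(4) `R ⊆ F_A(R) ∘ R⁻ ∘ G_A(R)` for every `A ∈ V` and reflexive admissible `R`. -/
theorem stmt18 {σ : Signature} (E : EqTheory σ)
    (F G : ∀ A : UAAlgebra σ, Satisfies A E → Rel A → Rel A)
    (hF : GlobalOp E F) (hG : GlobalOp E G)
    (hFmono : MonotoneOp E F) (hGmono : MonotoneOp E G)
    (hFhom : HomProp E F) (hGhom : HomProp E G) :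
    List.TFAE
      [ ∃ t : Term σ 3, ∀ (A : UAAlgebra σ) (hA : Satisfies A E),
          MalcevMod A (F A hA) (G A hA) t,
        ∀ (A : UAAlgebra σ) (hA : Satisfies A E), ∃ t : Term σ 3,
          MalcevMod A (F A hA) (G A hA) t,
        ∀ (A : UAAlgebra σ) (hA : Satisfies A E) (R : Rel A), RAdm A R →
          ∀ a c, comp R R a c → comp (F A hA R) (comp R (G A hA R)) a c,
        ∀ (A : UAAlgebra σ) (hA : Satisfies A E) (R : Rel A), RAdm A R →
          ∀ a c, R a c → comp (F A hA R) (comp (conv R) (G A hA R)) a c ] := by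
  tfae_have 1 → 2 := fun ⟨t, h⟩ A hA => ⟨t, h A hA⟩
  tfae_have 2 → 3 := by
    rintro h2 A hA R hR a c ⟨b, hab, hbc⟩
    obtain ⟨t, ht⟩ := h2 A hA
    refine ⟨tApp A t a b b, (ht R hR a b hab).1, tApp A t b b c, ?_, (ht R hR b c hbc).2⟩
    refine compat_eval hR.2 t ![a,b,b] ![b,b,c] ?_
    intro j
    fin_cases j
    · exact hab
    · exact hR.1 b
    · exact hbc
  tfae_have 2 → 4 := by
    intro h2 A hA R hR a c hac
    obtain ⟨t, ht⟩ := h2 A hA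
    refine ⟨tApp A t a c c, (ht R hR a c hac).1, tApp A t a a c, ?_, (ht R hR a c hac).2⟩
    refine compat_eval hR.2 t ![a,a,c] ![a,c,c] ?_
    intro j
    fin_cases j
    · exact hR.1 a
    · exact hac
    · exact hR.1 c
  tfae_have 3 → 1 := by
    intro h3
    have hQ := freeAlg_satisfies 3 E
    set x : FQ 3 E := gen 3 E 0 with hx
    set y : FQ 3 E := gen 3 E 1 with hy
    set z : FQ 3 E := gen 3 E 2 with hz
    set X : Rel (FreeAlg 3 E) := fun a b => (a = x ∧ b = y) ∨ (a = y ∧ b = z) with hXdef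
    have hR : RAdm (FreeAlg 3 E) (clRefl (FreeAlg 3 E) X) := clRefl_radm _ X
    have hxz : comp (clRefl (FreeAlg 3 E) X) (clRefl (FreeAlg 3 E) X) x z :=
      ⟨y, le_clRefl X x y (Or.inl ⟨rfl, rfl⟩), le_clRefl X y z (Or.inr ⟨rfl, rfl⟩)⟩
    obtain ⟨u, hFu, v, hRuv, hGv⟩ := h3 (FreeAlg 3 E) hQ _ hR x z hxz
    set p : Fin 5 → FQ 3 E := ![x, y, z, x, y] with hp
    set q : Fin 5 → FQ 3 E := ![x, y, z, y, z] with hq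
    have hS : ∀ a b, clRefl (FreeAlg 3 E) X a b → termRel (FreeAlg 3 E) p q a b := by
      refine clRefl_le (termRel_refl p q ![0,1,2] ?_ ?_) (termRel_compat (FreeAlg 3 E) p q) ?_
      · intro k; fin_cases k <;> rfl
      · intro k; fin_cases k <;> rfl
      · rintro a b (⟨rfl, rfl⟩ | ⟨rfl, rfl⟩)
        · exact ⟨.var 3, rfl, rfl⟩
        · exact ⟨.var 4, rfl, rfl⟩
    obtain ⟨w, hu, hv⟩ := hS u v hRuv
    refine ⟨rename ![0,1,2,0,2] w, ?_⟩
    intro A hA R' hR' a b hab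
    constructor
    · have h := transferF hFmono hFhom X hFu A hA R' hR' ![a,b,b] ?_
      · have he : ev A hA ![a,b,b] u = tApp A (rename ![0,1,2,0,2] w) a b b := by
          rw [hu]
          have h2 : ev A hA ![a,b,b] (w.eval (FreeAlg 3 E) p)
              = w.eval A (fun i => ev A hA ![a,b,b] (p i)) :=
            hom_eval (evHom A hA ![a,b,b]) w p
          rw [h2]
          show _ = (rename ![0,1,2,0,2] w).eval A ![a,b,b]
          rw [eval_rename]
          congr 1
          funext i
          fin_cases i <;> rfl
        exact he ▸ h
      · rintro p' q' (⟨rfl, rfl⟩ | ⟨rfl, rfl⟩)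
        · exact hab
        · exact hR'.1 b
    · have h := transferF hGmono hGhom X hGv A hA R' hR' ![a,a,b] ?_
      · have he : ev A hA ![a,a,b] v = tApp A (rename ![0,1,2,0,2] w) a a b := by
          rw [hv]
          have h2 : ev A hA ![a,a,b] (w.eval (FreeAlg 3 E) q)
              = w.eval A (fun i => ev A hA ![a,a,b] (q i)) :=
            hom_eval (evHom A hA ![a,a,b]) w q
          rw [h2]
          show _ = (rename ![0,1,2,0,2] w).eval A ![a,a,b]
          rw [eval_rename]
          congr 1
          funext i
          fin_cases i <;> rfl
        exact he ▸ h
      · rintro p' q' (⟨rfl, rfl⟩ | ⟨rfl, rfl⟩)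
        · exact hR'.1 a
        · exact hab
  tfae_have 4 → 1 := by
    intro h4
    have hQ := freeAlg_satisfies 2 E
    set x : FQ 2 E := gen 2 E 0 with hx
    set y : FQ 2 E := gen 2 E 1 with hy
    set X : Rel (FreeAlg 2 E) := fun a b => a = x ∧ b = y with hXdef
    have hR : RAdm (FreeAlg 2 E) (clRefl (FreeAlg 2 E) X) := clRefl_radm _ X
    have hxy : clRefl (FreeAlg 2 E) X x y := le_clRefl X x y ⟨rfl, rfl⟩
    obtain ⟨u, hFu, v, hvu, hGv⟩ := h4 (FreeAlg 2 E) hQ _ hR x y hxy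
    set p : Fin 3 → FQ 2 E := ![x, y, x] with hp
    set q : Fin 3 → FQ 2 E := ![x, y, y] with hq
    have hS : ∀ a b, clRefl (FreeAlg 2 E) X a b → termRel (FreeAlg 2 E) p q a b := by
      refine clRefl_le (termRel_refl p q ![0,1] ?_ ?_) (termRel_compat (FreeAlg 2 E) p q) ?_
      · intro k; fin_cases k <;> rfl
      · intro k; fin_cases k <;> rfl
      · rintro a b ⟨rfl, rfl⟩
        exact ⟨.var 2, rfl, rfl⟩
    obtain ⟨w, hv, hu⟩ := hS v u hvu
    refine ⟨rename ![0,2,1] w, ?_⟩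
    intro A hA R' hR' a b hab
    have hXmap : ∀ p' q', X p' q' → R' (ev A hA ![a,b] p') (ev A hA ![a,b] q') := by
      rintro p' q' ⟨rfl, rfl⟩
      exact hab
    constructor
    · have h := transferF hFmono hFhom X hFu A hA R' hR' ![a,b] hXmap
      have he : ev A hA ![a,b] u = tApp A (rename ![0,2,1] w) a b b := by
        rw [hu]
        have h2 : ev A hA ![a,b] (w.eval (FreeAlg 2 E) q)
            = w.eval A (fun i => ev A hA ![a,b] (q i)) :=
          hom_eval (evHom A hA ![a,b]) w q
        rw [h2]
        show _ = (rename ![0,2,1] w).eval A ![a,b,b]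
        rw [eval_rename]
        congr 1
        funext i
        fin_cases i <;> rfl
      exact he ▸ h
    · have h := transferF hGmono hGhom X hGv A hA R' hR' ![a,b] hXmap
      have he : ev A hA ![a,b] v = tApp A (rename ![0,2,1] w) a a b := by
        rw [hv]
        have h2 : ev A hA ![a,b] (w.eval (FreeAlg 2 E) p)
            = w.eval A (fun i => ev A hA ![a,b] (p i)) :=
          hom_eval (evHom A hA ![a,b]) w p
        rw [h2]
        show _ = (rename ![0,2,1] w).eval A ![a,a,b]
        rw [eval_rename]
        congr 1
        funext i
        fin_cases i <;> rfl
      exact he ▸ h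
  tfae_finish
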